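/- Let K be a field complete with respect to a nontrivial discrete additive valuation v_K, let L/K be a finite field extension and v_L the unique additive valuation on L extending v_K. Let V = K^{n+1}, let v be a v_K-valuation on V, and suppose the basis (x₀,…,x_n) diagonalizes v, i.e. v(∑_i a_i·x_i) = min_i (v_K(a_i) + v(x_i)) for all a_i ∈ K. Define ṽ : L^{n+1} → ℝ ∪ {∞} by ṽ(x) := sup over all finite representations x = ∑_j b_j·y_j with b_j ∈ L and y_j ∈ V of min_j (v_L(b_j) + v(y_j)). Then ṽ is a v_L-valuation on L^{n+1} whose restriction to V equals v, and for all b₀,…,b_n ∈ L one has ṽ(∑_i b_i·x_i) = min_i (v_L(b_i) + v(x_i)). -/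

import Mathlib

private lemma ereal_exists_min {ι : Type*} [Fintype ι] [Nonempty ι] (g : ι → EReal) :
    ∃ j0, (⨅ j, g j) = g j0 ∧ ∀ j, g j0 ≤ g j := by
  obtain ⟨j0, hj0⟩ := Finite.exists_min g
  exact ⟨j0, le_antisymm (iInf_le _ _) (le_iInf hj0), hj0⟩

private lemma ereal_iInf_add {ι : Type*} [Fintype ι] [Nonempty ι] (g : ι → EReal) (t : EReal) :
    (⨅ j, (g j + t)) = (⨅ j, g j) + t := by
  obtain ⟨j0, h1, h2⟩ := ereal_exists_min g
  rw [h1]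
  exact le_antisymm (iInf_le _ j0) (le_iInf fun j => add_le_add_left (h2 j) t)

private lemma ereal_add_iInf {ι : Type*} [Fintype ι] [Nonempty ι] (g : ι → EReal) (t : EReal) :
    (⨅ j, (t + g j)) = t + ⨅ j, g j := by
  obtain ⟨j0, h1, h2⟩ := ereal_exists_min g
  rw [h1]
  exact le_antisymm (iInf_le _ j0) (le_iInf fun j => add_le_add_right (h2 j) t)

private lemma le_val_sum {L : Type*} [Field L] (vL : L → EReal)
    (h0 : vL 0 = ⊤) (hadd : ∀ a b : L, min (vL a) (vL b) ≤ vL (a + b))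
    {ι : Type*} (s : Finset ι) (f : ι → L) (M : EReal)
    (h : ∀ j ∈ s, M ≤ vL (f j)) : M ≤ vL (∑ j ∈ s, f j) := by
  induction s using Finset.cons_induction with
  | empty => simp [h0]
  | cons a s ha ih =>
    rw [Finset.sum_cons]
    refine le_trans (le_min (h a (Finset.mem_cons_self _ _))
      (ih fun j hj => h j (Finset.mem_cons_of_mem hj))) (hadd _ _)

private lemma ereal_add_top_aux {p q : EReal} (hqt : q ≠ ⊤) (hqb : q ≠ ⊥)
    (h : p + q = ⊤) : p = ⊤ := by
  induction p using EReal.rec with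
  | bot => rw [EReal.bot_add] at h; exact absurd h bot_ne_top
  | coe r =>
    lift q to ℝ using ⟨hqt, hqb⟩
    rw [← EReal.coe_add] at h
    exact absurd h (EReal.coe_ne_top _)
  | top => rfl

/-- Proposition 3.5 of the paper: canonical extension of a diagonalizable valuation under
base change.  Let `K` be complete with respect to a nontrivial discrete additive valuation
`vK`, `L/K` a finite extension and `vL` an additive valuation on `L` extending `vK`.
Let `v` be a `vK`-valuation on `V = K^{n+1}` diagonalized by a basis `b`, and let
`ṽ(x) := sup` over all finite representations `x = ∑_j c_j • y_j` (`c_j ∈ L`, `y_j ∈ V`)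
of `min_j (vL(c_j) + v(y_j))`.  Then `ṽ` is a `vL`-valuation on `L^{n+1}` restricting to
`v` on `V`, and the basis `b` diagonalizes `ṽ`. -/
theorem stmt8 {K L : Type*} [Field K] [Field L] [Algebra K L] [FiniteDimensional K L]
    (n : ℕ) (vK : K → EReal) (vL : L → EReal)
    (htopK : ∀ a : K, vK a = ⊤ ↔ a = 0)
    (hbotK : ∀ a : K, vK a ≠ ⊥)
    (hmulK : ∀ a b : K, vK (a * b) = vK a + vK b)
    (haddK : ∀ a b : K, min (vK a) (vK b) ≤ vK (a + b))
    (hdisc : ∃ c : ℝ, 0 < c ∧ ∀ a : K, a ≠ 0 → ∃ k : ℤ, vK a = (((k : ℝ) * c : ℝ) : EReal))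
    (hnontriv : ∃ a : K, a ≠ 0 ∧ vK a ≠ 0)
    (hcomplete : ∀ a : ℕ → K,
      (∀ M : ℝ, ∃ N : ℕ, ∀ m ≥ N, ∀ p ≥ N, (M : EReal) ≤ vK (a m - a p)) →
      ∃ l : K, ∀ M : ℝ, ∃ N : ℕ, ∀ p ≥ N, (M : EReal) ≤ vK (a p - l))
    (htopL : ∀ a : L, vL a = ⊤ ↔ a = 0)
    (hbotL : ∀ a : L, vL a ≠ ⊥)
    (hmulL : ∀ a b : L, vL (a * b) = vL a + vL b)
    (haddL : ∀ a b : L, min (vL a) (vL b) ≤ vL (a + b))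
    (hext : ∀ a : K, vL (algebraMap K L a) = vK a)
    (v : (Fin (n+1) → K) → EReal)
    (hv1 : ∀ x y : Fin (n+1) → K, min (v x) (v y) ≤ v (x + y))
    (hv2 : ∀ (c : K) (x : Fin (n+1) → K), v (c • x) = vK c + v x)
    (hv3 : ∀ x : Fin (n+1) → K, v x = ⊤ ↔ x = 0)
    (b : Module.Basis (Fin (n+1)) K (Fin (n+1) → K))
    (hdiag : ∀ a : Fin (n+1) → K,
      v (∑ i, a i • b i) = ⨅ i, (vK (a i) + v (b i)))
    (vt : (Fin (n+1) → L) → EReal)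
    (hvt : ∀ x : Fin (n+1) → L,
      vt x = sSup {r : EReal |
        ∃ (N : ℕ) (c : Fin N → L) (y : Fin N → (Fin (n+1) → K)),
          x = ∑ j, c j • (fun s => algebraMap K L (y j s)) ∧
          r = ⨅ j, (vL (c j) + v (y j))}) :
    (∀ x y : Fin (n+1) → L, min (vt x) (vt y) ≤ vt (x + y)) ∧
    (∀ (c : L) (x : Fin (n+1) → L), vt (c • x) = vL c + vt x) ∧
    (∀ x : Fin (n+1) → L, vt x = ⊤ ↔ x = 0) ∧
    (∀ x : Fin (n+1) → K, vt (fun s => algebraMap K L (x s)) = v x) ∧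
    (∀ a : Fin (n+1) → L,
      vt (∑ i, a i • (fun s => algebraMap K L (b i s))) = ⨅ i, (vL (a i) + v (b i))) := by
  clear haddK hmulK hdisc hnontriv hcomplete hv1 hv2 hbotK
  -- basic facts
  have hvK0 : vK 0 = ⊤ := (htopK 0).mpr rfl
  have hvL0 : vL 0 = ⊤ := (htopL 0).mpr rfl
  have hbtop : ∀ i, v (b i) ≠ ⊤ := fun i h => b.ne_zero i ((hv3 _).mp h)
  have hbbot : ∀ i, v (b i) ≠ ⊥ := by
    intro i h
    have h0 : v (∑ i, (0 : K) • b i) = ⨅ i, (vK 0 + v (b i)) := hdiag 0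
    rw [show (∑ i, (0 : K) • b i) = 0 by simp, (hv3 0).mpr rfl] at h0
    have h1 := iInf_eq_top.mp h0.symm i
    rw [h, EReal.add_bot] at h1
    exact absurd h1 bot_ne_top
  -- the base-changed basis
  set M : Matrix (Fin (n+1)) (Fin (n+1)) L := fun s j => algebraMap K L (b j s) with hM
  have hMeq : M = ((Pi.basisFun K (Fin (n+1))).toMatrix ⇑b).map (algebraMap K L) := by
    ext s j
    simp [hM, Module.Basis.toMatrix, Matrix.map]
  haveI inv1 : Invertible ((Pi.basisFun K (Fin (n+1))).toMatrix ⇑b) :=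
    (Pi.basisFun K (Fin (n+1))).invertibleToMatrix b
  haveI inv2 : Invertible M := by
    rw [hMeq, ← RingHom.mapMatrix_apply]
    exact Invertible.map ((algebraMap K L).mapMatrix) _
  set bL : Module.Basis (Fin (n+1)) L (Fin (n+1) → L) :=
    (Pi.basisFun L (Fin (n+1))).map (M.toLinearEquiv' inv2) with hbLdef
  have hbL : ∀ i, bL i = fun s => algebraMap K L (b i s) := by
    intro i
    ext s
    simp [hbLdef, Module.Basis.map_apply, Matrix.toLinearEquiv', Matrix.toLin'_apply,
      Matrix.mulVec_single, Pi.basisFun_apply, hM]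
    exact congrFun (Matrix.mulVec_single_one (M := (fun s j => (algebraMap K L) (b j s) : Matrix (Fin (n+1)) (Fin (n+1)) L)) i) s
  have hrep : ∀ a : Fin (n+1) → L,
      ⇑(bL.repr (∑ i, a i • (fun s => algebraMap K L (b i s)))) = a := by
    intro a
    have h1 : (∑ i, a i • (fun s => algebraMap K L (b i s))) = ∑ i, a i • bL i := by
      simp only [hbL]
    rw [h1, bL.repr_sum_self]
  have hsum : ∀ x : Fin (n+1) → L,
      x = ∑ i, bL.repr x i • (fun s => algebraMap K L (b i s)) := by
    intro x
    conv_lhs => rw [← bL.sum_repr x]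
    simp only [hbL]
  -- the key formula
  have hkey : ∀ x : Fin (n+1) → L, vt x = ⨅ i, (vL (bL.repr x i) + v (b i)) := by
    intro x
    rw [hvt x]
    apply le_antisymm
    · apply sSup_le
      rintro r ⟨N, c, y, hxy, rfl⟩
      have hyi : ∀ j, (fun s => algebraMap K L (y j s)) =
          ∑ i, (algebraMap K L (b.repr (y j) i)) • (fun s => algebraMap K L (b i s)) := by
        intro j
        funext s
        conv_lhs => rw [show y j = ∑ i, b.repr (y j) i • b i from (b.sum_repr (y j)).symm]
        simp [Finset.sum_apply, map_sum, Algebra.smul_def]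
      have hx2 : x = ∑ i, (∑ j, c j * algebraMap K L (b.repr (y j) i)) •
          (fun s => algebraMap K L (b i s)) := by
        rw [hxy]
        calc ∑ j, c j • (fun s => algebraMap K L (y j s))
            = ∑ j, ∑ i, (c j * algebraMap K L (b.repr (y j) i)) •
                (fun s => algebraMap K L (b i s)) := by
              refine Finset.sum_congr rfl fun j _ => ?_
              rw [hyi j, Finset.smul_sum]
              exact Finset.sum_congr rfl fun i _ => smul_smul _ _ _
          _ = ∑ i, (∑ j, c j * algebraMap K L (b.repr (y j) i)) •
                (fun s => algebraMap K L (b i s)) := by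
              rw [Finset.sum_comm]
              exact Finset.sum_congr rfl fun i _ => (Finset.sum_smul).symm
      have hcoord : ⇑(bL.repr x) = fun i => ∑ j, c j * algebraMap K L (b.repr (y j) i) := by
        have h2 := hrep (fun i => ∑ j, c j * algebraMap K L (b.repr (y j) i))
        rw [← hx2] at h2
        exact h2
      refine le_iInf fun i => ?_
      rw [congrFun hcoord i]
      rcases isEmpty_or_nonempty (Fin N) with hN | hN
      · rw [show (∑ j, c j * algebraMap K L (b.repr (y j) i)) = 0 by simp,
          hvL0, EReal.top_add_of_ne_bot (hbbot i)]
        exact le_top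
      · have h1 : (⨅ j, vL (c j * algebraMap K L (b.repr (y j) i))) ≤
            vL (∑ j, c j * algebraMap K L (b.repr (y j) i)) :=
          le_val_sum vL hvL0 haddL Finset.univ _ _ (fun j _ => iInf_le _ j)
        refine le_trans ?_ (add_le_add_left h1 _)
        rw [← ereal_iInf_add]
        refine le_iInf fun j => le_trans (iInf_le _ j) ?_
        rw [hmulL, hext]
        have h2 : v (y j) ≤ vK (b.repr (y j) i) + v (b i) := by
          have h3 := hdiag (fun i => b.repr (y j) i)
          rw [b.sum_repr] at h3
          rw [h3]
          exact iInf_le _ i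
        calc vL (c j) + v (y j)
            ≤ vL (c j) + (vK (b.repr (y j) i) + v (b i)) := add_le_add_right h2 _
          _ = vL (c j) + vK (b.repr (y j) i) + v (b i) := (add_assoc _ _ _).symm
    · exact le_sSup ⟨n + 1, ⇑(bL.repr x), ⇑b, hsum x, rfl⟩
  refine ⟨?_, ?_, ?_, ?_, ?_⟩
  · -- subadditivity
    intro x y
    rw [hkey x, hkey y, hkey (x + y)]
    refine le_iInf fun i => ?_
    have hxy : bL.repr (x + y) i = bL.repr x i + bL.repr y i := by simp
    rw [hxy]
    rcases le_total (vL (bL.repr x i)) (vL (bL.repr y i)) with h | h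
    · have h2 : vL (bL.repr x i) ≤ vL (bL.repr x i + bL.repr y i) := by
        have h3 := haddL (bL.repr x i) (bL.repr y i)
        rwa [min_eq_left h] at h3
      exact le_trans (min_le_left _ _) (le_trans (iInf_le _ i) (add_le_add_left h2 _))
    · have h2 : vL (bL.repr y i) ≤ vL (bL.repr x i + bL.repr y i) := by
        have h3 := haddL (bL.repr x i) (bL.repr y i)
        rwa [min_eq_right h] at h3
      exact le_trans (min_le_right _ _) (le_trans (iInf_le _ i) (add_le_add_left h2 _))
  · -- scalars
    intro c x
    rw [hkey x, hkey (c • x), ← ereal_add_iInf]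
    refine iInf_congr fun i => ?_
    have h1 : bL.repr (c • x) i = c * bL.repr x i := by simp
    rw [h1, hmulL, add_assoc]
  · -- top iff zero
    intro x
    rw [hkey x]
    constructor
    · intro h
      have h2 := iInf_eq_top.mp h
      have hz : bL.repr x = 0 := by
        ext i
        exact (htopL _).mp (ereal_add_top_aux (hbtop i) (hbbot i) (h2 i))
      simpa using bL.repr.map_eq_zero_iff.mp hz
    · rintro rfl
      rw [iInf_eq_top]
      intro i
      rw [show bL.repr (0 : Fin (n+1) → L) i = 0 by simp, hvL0]
      exact EReal.top_add_of_ne_bot (hbbot i)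
  · -- restriction to V
    intro x
    have h1 : (fun s => algebraMap K L (x s)) =
        ∑ i, (algebraMap K L (b.repr x i)) • (fun s => algebraMap K L (b i s)) := by
      funext s
      conv_lhs => rw [show x = ∑ i, b.repr x i • b i from (b.sum_repr x).symm]
      simp [Finset.sum_apply, map_sum, Algebra.smul_def]
    rw [hkey]
    have hc := hrep (fun i => algebraMap K L (b.repr x i))
    rw [← h1] at hc
    have h3 := hdiag (fun i => b.repr x i)
    rw [b.sum_repr] at h3
    rw [h3]
    exact iInf_congr fun i => by rw [congrFun hc i, hext]
  · -- diagonalization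
    intro a
    rw [hkey]
    exact iInf_congr fun i => by rw [congrFun (hrep a) i]
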